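/- arXiv:1502.01456 — 4 statements merged into one kernel-verified Lean document; each statement's English description precedes it below -/
import Mathlib

section
/- The optimal aggregate charging profile (s*_1,...,s*_T) of the offline problem — minimizing sum_{t=1}^T f(s_t + l_t) subject to the cumulative demand constraints — is the same for every strictly convex, increasing, differentiable cost function f. In particular, it coincides with the minimizer of the load variance sum_{t=1}^T (s_t + l_t − L̄)^2, where L̄ = (sum_t (s_t + l_t))/T. -/
open Finset

/-- Feasibility of an aggregate profile `s` with respect to cumulative demand
bounds: `D⁻(n) ≤ s_1 + ... + s_n ≤ D⁺(n)` for all `n = 1,...,T`. -/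
def AggFeasible (T : ℕ) (Dm Dp : ℕ → ℝ) (s : ℕ → ℝ) : Prop :=
  ∀ n, 1 ≤ n → n ≤ T →
    Dm n ≤ ∑ t ∈ Finset.Icc 1 n, s t ∧ ∑ t ∈ Finset.Icc 1 n, s t ≤ Dp n

/-- Two-point strict convexity swap inequality. -/
lemma swap_ineq {f : ℝ → ℝ} (hf : StrictConvexOn ℝ Set.univ f)
    {a b ε : ℝ} (hab : a < b) (hε : 0 < ε) (hε2 : ε ≤ (b - a) / 2) :
    f (a + ε) + f (b - ε) < f a + f b := by
  have hba : 0 < b - a := by linarith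
  set μ := ε / (b - a) with hμdef
  have hμ0 : 0 < μ := div_pos hε hba
  have hμ1 : μ < 1 := by rw [hμdef, div_lt_one hba]; linarith
  have hme : μ * (b - a) = ε := div_mul_cancel₀ ε (ne_of_gt hba)
  have h1 : f ((1 - μ) * a + μ * b) < (1 - μ) * f a + μ * f b := by
    have := hf.2 (Set.mem_univ a) (Set.mem_univ b) (ne_of_lt hab)
      (by linarith : (0:ℝ) < 1 - μ) hμ0 (by ring)
    simpa [smul_eq_mul] using this
  have h2 : f (μ * a + (1 - μ) * b) < μ * f a + (1 - μ) * f b := by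
    have := hf.2 (Set.mem_univ a) (Set.mem_univ b) (ne_of_lt hab)
      hμ0 (by linarith : (0:ℝ) < 1 - μ) (by ring)
    simpa [smul_eq_mul] using this
  have e1 : (1 - μ) * a + μ * b = a + ε := by linear_combination hme
  have e2 : μ * a + (1 - μ) * b = b - ε := by linear_combination -hme
  rw [e1] at h1; rw [e2] at h2
  linarith

lemma noswap (T : ℕ) (Dm Dp : ℕ → ℝ) (l : ℕ → ℝ) (f : ℝ → ℝ)
    (hf : StrictConvexOn ℝ Set.univ f) (x : ℕ → ℝ)
    (hx : AggFeasible T Dm Dp x)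
    (hopt : ∀ s, AggFeasible T Dm Dp s →
      (∑ t ∈ Finset.Icc 1 T, f (x t + l t)) ≤ ∑ t ∈ Finset.Icc 1 T, f (s t + l t))
    (n : ℕ) (h1 : 1 ≤ n) (h2 : n + 1 ≤ T) :
    (∑ t ∈ Finset.Icc 1 n, x t < Dp n → x (n+1) + l (n+1) ≤ x n + l n) ∧
    (Dm n < ∑ t ∈ Finset.Icc 1 n, x t → x n + l n ≤ x (n+1) + l (n+1)) := by
  have hnmem : n ∈ Finset.Icc 1 T := by simp [Finset.mem_Icc]; omega
  have hn1mem : n + 1 ∈ Finset.Icc 1 T := by simp [Finset.mem_Icc]; omega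
  have hne : n ≠ n + 1 := by omega
  constructor
  · -- upper constraint slack at n
    intro hslack
    by_contra hcon
    push_neg at hcon
    set a := x n + l n with ha
    set b := x (n+1) + l (n+1) with hb
    set ε := min (Dp n - ∑ t ∈ Finset.Icc 1 n, x t) ((b - a) / 2) with hε
    have hε0 : 0 < ε := lt_min (by linarith) (by dsimp [a, b] at hcon ⊢; linarith)
    -- perturbed profile
    set s' : ℕ → ℝ := fun t => x t + (if t = n then ε else 0) - (if t = n + 1 then ε else 0)
      with hs'
    have hsum : ∀ m, ∑ t ∈ Finset.Icc 1 m, s' t =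
        (∑ t ∈ Finset.Icc 1 m, x t) + (if n ∈ Finset.Icc 1 m then ε else 0)
          - (if n + 1 ∈ Finset.Icc 1 m then ε else 0) := by
      intro m
      rw [hs']
      rw [Finset.sum_sub_distrib, Finset.sum_add_distrib,
        Finset.sum_ite_eq' (Finset.Icc 1 m) n (fun _ => ε),
        Finset.sum_ite_eq' (Finset.Icc 1 m) (n+1) (fun _ => ε)]
    have hfeas : AggFeasible T Dm Dp s' := by
      intro m hm1 hmT
      rw [hsum m]
      rcases le_or_gt (n+1) m with hc1 | hc1
      · have e1 : n ∈ Finset.Icc 1 m := by simp [Finset.mem_Icc]; omega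
        have e2 : n + 1 ∈ Finset.Icc 1 m := by simp [Finset.mem_Icc]; omega
        rw [if_pos e1, if_pos e2]
        have := hx m hm1 hmT
        constructor <;> linarith [this.1, this.2]
      · rcases le_or_gt n m with hc2 | hc2
        · have hmn : m = n := by omega
          subst hmn
          have e1 : m ∈ Finset.Icc 1 m := by simp [Finset.mem_Icc]; omega
          have e2 : m + 1 ∉ Finset.Icc 1 m := by simp [Finset.mem_Icc]
          rw [if_pos e1, if_neg e2]
          have := hx m hm1 hmT
          have hεle : ε ≤ Dp m - ∑ t ∈ Finset.Icc 1 m, x t := min_le_left _ _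
          constructor <;> linarith [this.1]
        · have e1 : n ∉ Finset.Icc 1 m := by simp [Finset.mem_Icc]; omega
          have e2 : n + 1 ∉ Finset.Icc 1 m := by simp [Finset.mem_Icc]; omega
          rw [if_neg e1, if_neg e2]
          have := hx m hm1 hmT
          constructor <;> linarith [this.1, this.2]
    have hdiff : ∑ t ∈ Finset.Icc 1 T, (f (s' t + l t) - f (x t + l t))
        = (f (a + ε) - f a) + (f (b - ε) - f b) := by
      rw [Finset.sum_eq_add_of_mem n (n+1) hnmem hn1mem hne ?_]
      · have e1 : s' n = x n + ε := by simp [hs', hne]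
        have e2 : s' (n+1) = x (n+1) - ε := by
          simp [hs', (by omega : n + 1 ≠ n)]
        rw [e1, e2, ha, hb]
        ring_nf
      · intro c _ hc
        have e : s' c = x c := by simp [hs', hc.1, hc.2]
        rw [e]; ring
    have hle := hopt s' hfeas
    rw [Finset.sum_sub_distrib] at hdiff
    have hsw : f (a + ε) + f (b - ε) < f a + f b :=
      swap_ineq hf (by dsimp [a,b] at hcon ⊢; linarith) hε0 (min_le_right _ _)
    linarith
  · -- lower constraint slack at n
    intro hslack
    by_contra hcon
    push_neg at hcon
    set a := x (n+1) + l (n+1) with ha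
    set b := x n + l n with hb
    set ε := min ((∑ t ∈ Finset.Icc 1 n, x t) - Dm n) ((b - a) / 2) with hε
    have hε0 : 0 < ε := lt_min (by linarith) (by dsimp [a, b] at hcon ⊢; linarith)
    set s' : ℕ → ℝ := fun t => x t + (if t = n + 1 then ε else 0) - (if t = n then ε else 0)
      with hs'
    have hsum : ∀ m, ∑ t ∈ Finset.Icc 1 m, s' t =
        (∑ t ∈ Finset.Icc 1 m, x t) + (if n + 1 ∈ Finset.Icc 1 m then ε else 0)
          - (if n ∈ Finset.Icc 1 m then ε else 0) := by
      intro m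
      rw [hs']
      rw [Finset.sum_sub_distrib, Finset.sum_add_distrib,
        Finset.sum_ite_eq' (Finset.Icc 1 m) (n+1) (fun _ => ε),
        Finset.sum_ite_eq' (Finset.Icc 1 m) n (fun _ => ε)]
    have hfeas : AggFeasible T Dm Dp s' := by
      intro m hm1 hmT
      rw [hsum m]
      rcases le_or_gt (n+1) m with hc1 | hc1
      · have e1 : n ∈ Finset.Icc 1 m := by simp [Finset.mem_Icc]; omega
        have e2 : n + 1 ∈ Finset.Icc 1 m := by simp [Finset.mem_Icc]; omega
        rw [if_pos e1, if_pos e2]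
        have := hx m hm1 hmT
        constructor <;> linarith [this.1, this.2]
      · rcases le_or_gt n m with hc2 | hc2
        · have hmn : m = n := by omega
          subst hmn
          have e1 : m ∈ Finset.Icc 1 m := by simp [Finset.mem_Icc]; omega
          have e2 : m + 1 ∉ Finset.Icc 1 m := by simp [Finset.mem_Icc]
          rw [if_pos e1, if_neg e2]
          have := hx m hm1 hmT
          have hεle : ε ≤ (∑ t ∈ Finset.Icc 1 m, x t) - Dm m := min_le_left _ _
          constructor <;> linarith [this.2]
        · have e1 : n ∉ Finset.Icc 1 m := by simp [Finset.mem_Icc]; omega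
          have e2 : n + 1 ∉ Finset.Icc 1 m := by simp [Finset.mem_Icc]; omega
          rw [if_neg e1, if_neg e2]
          have := hx m hm1 hmT
          constructor <;> linarith [this.1, this.2]
    have hdiff : ∑ t ∈ Finset.Icc 1 T, (f (s' t + l t) - f (x t + l t))
        = (f (a + ε) - f a) + (f (b - ε) - f b) := by
      rw [Finset.sum_eq_add_of_mem (n+1) n hn1mem hnmem (by omega) ?_]
      · have e1 : s' (n+1) = x (n+1) + ε := by
          simp [hs', (by omega : n + 1 ≠ n)]
        have e2 : s' n = x n - ε := by simp [hs', hne]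
        rw [e1, e2, ha, hb]
        ring_nf
      · intro c _ hc
        have e : s' c = x c := by simp [hs', hc.1, hc.2]
        rw [e]; ring
    have hle := hopt s' hfeas
    rw [Finset.sum_sub_distrib] at hdiff
    have hsw : f (a + ε) + f (b - ε) < f a + f b :=
      swap_ineq hf (by dsimp [a,b] at hcon ⊢; linarith) hε0 (min_le_right _ _)
    linarith

lemma total_eq (T : ℕ) (hT : 0 < T) (Dm Dp : ℕ → ℝ) (hDtot : Dm T = Dp T)
    (s : ℕ → ℝ) (hs : AggFeasible T Dm Dp s) :
    ∑ t ∈ Finset.Icc 1 T, s t = Dm T := by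
  have := hs T hT le_rfl
  have h2 := this.2
  rw [← hDtot] at h2
  linarith [this.1]

lemma key_ineq (T : ℕ) (hT : 0 < T) (Dm Dp : ℕ → ℝ) (hDtot : Dm T = Dp T)
    (l : ℕ → ℝ) (x w : ℕ → ℝ)
    (hx : AggFeasible T Dm Dp x) (hw : AggFeasible T Dm Dp w)
    (hns : ∀ n, 1 ≤ n → n + 1 ≤ T →
      (∑ t ∈ Finset.Icc 1 n, x t < Dp n → x (n+1) + l (n+1) ≤ x n + l n) ∧
      (Dm n < ∑ t ∈ Finset.Icc 1 n, x t → x n + l n ≤ x (n+1) + l (n+1))) :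
    0 ≤ ∑ t ∈ Finset.Icc 1 T, (x t + l t) * (w t - x t) := by
  have Q : ∀ m, 1 ≤ m → m ≤ T →
      (x m + l m) * (∑ t ∈ Finset.Icc 1 m, (w t - x t)) ≤
        ∑ t ∈ Finset.Icc 1 m, (x t + l t) * (w t - x t) := by
    intro m hm1
    induction m, hm1 using Nat.le_induction with
    | base => intro _; simp
    | succ m hm ih =>
      intro hmT
      have hmT' : m ≤ T := by omega
      have ih' := ih hmT'
      rw [Finset.sum_Icc_succ_top (by omega : 1 ≤ m + 1),
        Finset.sum_Icc_succ_top (by omega : 1 ≤ m + 1)]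
      set S := ∑ t ∈ Finset.Icc 1 m, (w t - x t) with hS
      have hSeq : S = (∑ t ∈ Finset.Icc 1 m, w t) - ∑ t ∈ Finset.Icc 1 m, x t := by
        rw [hS, Finset.sum_sub_distrib]
      have hxm := hx m hm hmT'
      have hwm := hw m hm hmT'
      have hmono : 0 < S → x (m+1) + l (m+1) ≤ x m + l m := by
        intro hpos
        exact (hns m hm (by omega)).1 (by linarith [hwm.2])
      have hmono' : S < 0 → x m + l m ≤ x (m+1) + l (m+1) := by
        intro hneg
        exact (hns m hm (by omega)).2 (by linarith [hwm.1])
      have hkey : (x (m+1) + l (m+1)) * S ≤ (x m + l m) * S := by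
        rcases lt_trichotomy S 0 with h | h | h
        · nlinarith [hmono' h]
        · rw [h]; ring_nf; rfl
        · nlinarith [hmono h]
      nlinarith [ih']
  have hQT := Q T hT le_rfl
  have hD : ∑ t ∈ Finset.Icc 1 T, (w t - x t) = 0 := by
    rw [Finset.sum_sub_distrib, total_eq T hT Dm Dp hDtot w hw,
      total_eq T hT Dm Dp hDtot x hx]
    ring
  rw [hD] at hQT
  simpa using hQT

/-- Theorem 2: the optimal aggregate profile of the offline problem is the same
for every strictly convex, increasing, differentiable cost `f`, and it minimizes
the load variance `∑ (s_t + l_t − L̄)²`, where `L̄` is the (constant) average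
total load. -/
theorem optimal_profile_invariance (T : ℕ) (hT : 0 < T)
    (Dm Dp : ℕ → ℝ) (hDtot : Dm T = Dp T) (l : ℕ → ℝ)
    (f g : ℝ → ℝ)
    (hfconv : StrictConvexOn ℝ Set.univ f) (hfmono : StrictMono f)
    (hfdiff : Differentiable ℝ f)
    (hgconv : StrictConvexOn ℝ Set.univ g) (hgmono : StrictMono g)
    (hgdiff : Differentiable ℝ g)
    (s1 s2 : ℕ → ℝ)
    (hs1 : AggFeasible T Dm Dp s1)
    (hs1opt : ∀ s, AggFeasible T Dm Dp s →
      (∑ t ∈ Finset.Icc 1 T, f (s1 t + l t)) ≤ ∑ t ∈ Finset.Icc 1 T, f (s t + l t))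
    (hs2 : AggFeasible T Dm Dp s2)
    (hs2opt : ∀ s, AggFeasible T Dm Dp s →
      (∑ t ∈ Finset.Icc 1 T, g (s2 t + l t)) ≤ ∑ t ∈ Finset.Icc 1 T, g (s t + l t)) :
    (∀ t, 1 ≤ t → t ≤ T → s1 t = s2 t) ∧
    (∀ s, AggFeasible T Dm Dp s →
      (∑ t ∈ Finset.Icc 1 T,
          (s1 t + l t - (Dm T + ∑ t ∈ Finset.Icc 1 T, l t) / T) ^ 2) ≤
        ∑ t ∈ Finset.Icc 1 T,
          (s t + l t - (Dm T + ∑ t ∈ Finset.Icc 1 T, l t) / T) ^ 2) := by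
  have hns1 := noswap T Dm Dp l f hfconv s1 hs1 hs1opt
  have hns2 := noswap T Dm Dp l g hgconv s2 hs2 hs2opt
  have hA := key_ineq T hT Dm Dp hDtot l s1 s2 hs1 hs2 hns1
  have hB := key_ineq T hT Dm Dp hDtot l s2 s1 hs2 hs1 hns2
  have hAB : ∑ t ∈ Finset.Icc 1 T,
      ((s1 t + l t) * (s2 t - s1 t) + (s2 t + l t) * (s1 t - s2 t))
      = ∑ t ∈ Finset.Icc 1 T, (-(s1 t - s2 t) ^ 2) :=
    Finset.sum_congr rfl (fun t _ => by ring)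
  rw [Finset.sum_add_distrib, Finset.sum_neg_distrib] at hAB
  have hsq0 : ∑ t ∈ Finset.Icc 1 T, (s1 t - s2 t) ^ 2 = 0 := by
    have hnn : 0 ≤ ∑ t ∈ Finset.Icc 1 T, (s1 t - s2 t) ^ 2 :=
      Finset.sum_nonneg (fun t _ => sq_nonneg _)
    linarith
  have heq : ∀ t ∈ Finset.Icc 1 T, (s1 t - s2 t) ^ 2 = 0 :=
    (Finset.sum_eq_zero_iff_of_nonneg (fun t _ => sq_nonneg _)).mp hsq0
  refine ⟨?_, ?_⟩
  · intro t ht1 htT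
    have := heq t (by simp [Finset.mem_Icc]; omega)
    have := pow_eq_zero_iff (by norm_num : 2 ≠ 0) |>.mp this
    linarith [sub_eq_zero.mp this]
  · intro s hs
    set c : ℝ := (Dm T + ∑ t ∈ Finset.Icc 1 T, l t) / T with hc
    have hS := key_ineq T hT Dm Dp hDtot l s1 s hs1 hs hns1
    have hd0 : ∑ t ∈ Finset.Icc 1 T, (s t - s1 t) = 0 := by
      rw [Finset.sum_sub_distrib, total_eq T hT Dm Dp hDtot s hs,
        total_eq T hT Dm Dp hDtot s1 hs1]
      ring
    have hexp : ∑ t ∈ Finset.Icc 1 T,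
        ((s t + l t - c) ^ 2 - (s1 t + l t - c) ^ 2)
        = ∑ t ∈ Finset.Icc 1 T,
          ((s t - s1 t) ^ 2 + 2 * ((s1 t + l t) * (s t - s1 t)) - 2 * c * (s t - s1 t)) :=
      Finset.sum_congr rfl (fun t _ => by ring)
    rw [Finset.sum_sub_distrib, Finset.sum_sub_distrib, Finset.sum_add_distrib,
      ← Finset.mul_sum, ← Finset.mul_sum, hd0, mul_zero] at hexp
    have hnn : 0 ≤ ∑ t ∈ Finset.Icc 1 T, (s t - s1 t) ^ 2 :=
      Finset.sum_nonneg (fun t _ => sq_nonneg _)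
    linarith
end

section
/- Under the MPC (expected value) policy, the charging rate s_t chosen at any stage t satisfies s_t ≤ sum over (m,n) ∈ O(t) of η_n^m, where O(t) = {(m,n) : e_m ≥ t, 1 ≤ m ≤ t, t ≤ n ≤ e_m} indexes the demands that have arrived by time t and have deadline at or after t. Consequently the expected MPC cost satisfies Φ₃ ≤ E[ sum_{t=1}^T f( sum_{(m,n)∈O(t)} η_n^m + ι_t ) ]. -/
open Finset MeasureTheory

/-- Proposition 2: under the MPC policy with the EDF state update, the rate
chosen at stage `t` is bounded by the total demand that has arrived by time `t`
with deadline at or after `t`; consequently, the expected MPC cost `Φ₃` is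
bounded by `E[∑_t f(∑_{(m,n)∈O(t)} η_n^m + ι_t)]`. -/
theorem mpc_cost_upper_bound
    {Ω : Type*} [MeasurableSpace Ω] (μ : Measure Ω) [IsProbabilityMeasure μ]
    (T : ℕ) (f : ℝ → ℝ) (hf : Monotone f)
    (η : Ω → ℕ → ℕ → ℝ)    -- η ω m n : demand arriving at time m with deadline n
    (ι : Ω → ℕ → ℝ)        -- base load
    (e : Ω → ℕ → ℕ)        -- latest deadline among arrivals at time m
    (dtil : Ω → ℕ → ℕ → ℝ) -- dtil ω t n : residual demand at time t with deadline n
    (s : Ω → ℕ → ℝ)        -- MPC charging rates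
    (hη : ∀ ω m n, 0 ≤ η ω m n)
    (hηz : ∀ ω m n, (n < m ∨ e ω m < n) → η ω m n = 0)
    (hd : ∀ ω t n, 0 ≤ dtil ω t n)
    (hinit : ∀ ω n, dtil ω 1 n = η ω 1 n)
    (hupd : ∀ ω t n, 1 ≤ t →
      dtil ω (t + 1) n =
        max (dtil ω t n - max (s ω t - ∑ j ∈ Finset.Ico t n, dtil ω t j) 0) 0
          + η ω (t + 1) n)
    (hcon : ∀ ω t, 1 ≤ t → t ≤ T →
      dtil ω t t ≤ s ω t ∧ s ω t ≤ ∑ n ∈ Finset.Icc t T, dtil ω t n)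
    (Φ₃ : ℝ)
    (hΦ₃ : Φ₃ = ∫ ω, ∑ t ∈ Finset.Icc 1 T, f (s ω t + ι ω t) ∂μ)
    (hint1 : Integrable (fun ω => ∑ t ∈ Finset.Icc 1 T, f (s ω t + ι ω t)) μ)
    (hint2 : Integrable (fun ω => ∑ t ∈ Finset.Icc 1 T,
      f ((∑ m ∈ Finset.Icc 1 t, ∑ n ∈ Finset.Icc t (e ω m), η ω m n) + ι ω t)) μ) :
    (∀ ω t, 1 ≤ t → t ≤ T →
      s ω t ≤ ∑ m ∈ Finset.Icc 1 t, ∑ n ∈ Finset.Icc t (e ω m), η ω m n) ∧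
    Φ₃ ≤ ∫ ω, ∑ t ∈ Finset.Icc 1 T,
      f ((∑ m ∈ Finset.Icc 1 t, ∑ n ∈ Finset.Icc t (e ω m), η ω m n) + ι ω t) ∂μ := by
  have key : ∀ ω t, 1 ≤ t → ∀ n, dtil ω t n ≤ ∑ m ∈ Finset.Icc 1 t, η ω m n := by
    intro ω t
    induction t with
    | zero => omega
    | succ t ih =>
      intro _ n
      rcases Nat.eq_zero_or_pos t with h0 | h1
      · subst h0
        simp [hinit ω n]
      · rw [hupd ω t n h1]
        have hstep : max (dtil ω t n - max (s ω t - ∑ j ∈ Finset.Ico t n, dtil ω t j) 0) 0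
            ≤ dtil ω t n := by
          have := hd ω t n
          have : (0:ℝ) ≤ max (s ω t - ∑ j ∈ Finset.Ico t n, dtil ω t j) 0 := le_max_right _ _
          simp only [max_le_iff]
          constructor <;> [linarith [hd ω t n]; exact hd ω t n]
        rw [Finset.sum_Icc_succ_top (by omega : 1 ≤ t + 1)]
        have := ih h1 n
        linarith
  have hs : ∀ ω t, 1 ≤ t → t ≤ T →
      s ω t ≤ ∑ m ∈ Finset.Icc 1 t, ∑ n ∈ Finset.Icc t (e ω m), η ω m n := by
    intro ω t h1 h2
    calc s ω t ≤ ∑ n ∈ Finset.Icc t T, dtil ω t n := (hcon ω t h1 h2).2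
      _ ≤ ∑ n ∈ Finset.Icc t T, ∑ m ∈ Finset.Icc 1 t, η ω m n :=
          Finset.sum_le_sum fun n _ => key ω t h1 n
      _ = ∑ m ∈ Finset.Icc 1 t, ∑ n ∈ Finset.Icc t T, η ω m n := Finset.sum_comm
      _ ≤ ∑ m ∈ Finset.Icc 1 t, ∑ n ∈ Finset.Icc t (e ω m), η ω m n := by
          refine Finset.sum_le_sum fun m _ => ?_
          have heq : ∑ n ∈ (Finset.Icc t T).filter (· ≤ e ω m), η ω m n
              = ∑ n ∈ Finset.Icc t T, η ω m n := by
            refine Finset.sum_subset (Finset.filter_subset _ _) fun n hn hnf => ?_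
            refine hηz ω m n (Or.inr ?_)
            simp only [Finset.mem_filter, not_and, not_le] at hnf
            exact hnf hn
          rw [← heq]
          refine Finset.sum_le_sum_of_subset_of_nonneg ?_ fun n _ _ => hη ω m n
          intro n hn
          simp only [Finset.mem_filter, Finset.mem_Icc] at hn ⊢
          exact ⟨hn.1.1, hn.2⟩
  refine ⟨hs, ?_⟩
  rw [hΦ₃]
  refine integral_mono hint1 hint2 fun ω => ?_
  refine Finset.sum_le_sum fun t ht => ?_
  rw [Finset.mem_Icc] at ht
  exact hf (by linarith [hs ω t ht.1 ht.2])
end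

section
/- Let (a_j)_{j≥1} be a p-periodic nonnegative sequence of slot weights (a_{j+p} = a_j), and for i ≤ j define the density ρ(i,j) = (a_i + ... + a_j)/(j − i + 1). If [ī, j̄] maximizes ρ over all subintervals of a window of length ê and j̄ ≥ ī + p (the maximizing interval spans at least one period), then ρ(ī, j̄ + p) ≥ ρ(ī, j̄); more generally ρ(ī, j̄ + kp) is nondecreasing in k, so the maximum density over the full horizon is attained at [ī, j̄ + (r−1)p] where r is the number of complete periods remaining. -/
open Finset

/-- Interval density of a sequence: `ρ(i,j) = (a_i + ... + a_j)/(j − i + 1)`. -/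
noncomputable def intervalDensity (a : ℕ → ℝ) (i j : ℕ) : ℝ :=
  (∑ t ∈ Finset.Icc i j, a t) / ((j : ℝ) - i + 1)

/-- Lemma 1 (case `j̄ ≥ ī + p`): for a `p`-periodic nonnegative weight sequence,
if `[ī, j̄]` maximizes the density over subintervals of a window of length `ê`
and spans at least one period, then appending a period does not decrease the
density: `ρ(ī, j̄ + p) ≥ ρ(ī, j̄)`, and more generally `ρ(ī, j̄ + k·p)` is
nondecreasing in `k`. -/
theorem periodic_density_append_period (a : ℕ → ℝ) (p : ℕ) (hp : 1 ≤ p)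
    (ha : ∀ t, 0 ≤ a t) (hper : ∀ t, a (t + p) = a t)
    (lo ehat ibar jbar : ℕ)
    (hlo : lo ≤ ibar) (hij : ibar ≤ jbar) (hwin : jbar ≤ lo + ehat)
    (hspan : ibar + p ≤ jbar)
    (hmax : ∀ i j, lo ≤ i → i ≤ j → j ≤ lo + ehat →
      intervalDensity a i j ≤ intervalDensity a ibar jbar) :
    intervalDensity a ibar jbar ≤ intervalDensity a ibar (jbar + p) ∧
      Monotone (fun k : ℕ => intervalDensity a ibar (jbar + k * p)) := by
  -- the sum over one period
  set S : ℝ := ∑ t ∈ Finset.Ioc 0 p, a t with hSdef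
  -- sum over any p consecutive slots equals S
  have hC : ∀ m, ∑ t ∈ Finset.Ioc m (m + p), a t = S := by
    intro m
    induction m with
    | zero => simp [hSdef]
    | succ n ih =>
      have h1 : ∑ t ∈ Finset.Ioc n (n + 1 + p), a t
          = ∑ t ∈ Finset.Ioc n (n + 1), a t + ∑ t ∈ Finset.Ioc (n + 1) (n + 1 + p), a t :=
        (Finset.sum_Ioc_consecutive _ (by omega) (by omega)).symm
      have h2 : ∑ t ∈ Finset.Ioc n (n + 1 + p), a t
          = ∑ t ∈ Finset.Ioc n (n + p), a t + ∑ t ∈ Finset.Ioc (n + p) (n + 1 + p), a t :=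
        (Finset.sum_Ioc_consecutive _ (by omega) (by omega)).symm
      have h3 : ∑ t ∈ Finset.Ioc n (n + 1), a t = a (n + 1) := by
        have h : Finset.Ioc n (n + 1) = {n + 1} := by
          ext x; simp only [Finset.mem_Ioc, Finset.mem_singleton]; omega
        simp [h]
      have h4 : ∑ t ∈ Finset.Ioc (n + p) (n + 1 + p), a t = a (n + 1 + p) := by
        have h : Finset.Ioc (n + p) (n + 1 + p) = {n + 1 + p} := by
          ext x; simp only [Finset.mem_Ioc, Finset.mem_singleton]; omega
        simp [h]
      have h5 : a (n + 1 + p) = a (n + 1) := hper (n + 1)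
      rw [h3] at h1
      rw [h4, h5, ih] at h2
      linarith [h1.symm.trans h2]
  -- splitting a sum over an Icc
  have hsplit : ∀ i m j : ℕ, i ≤ m → m ≤ j →
      ∑ t ∈ Finset.Icc i j, a t
        = ∑ t ∈ Finset.Icc i m, a t + ∑ t ∈ Finset.Ioc m j, a t := by
    intro i m j h1 h2
    have hu : Finset.Icc i j = Finset.Icc i m ∪ Finset.Ioc m j := by
      ext x
      simp only [Finset.mem_Icc, Finset.mem_Ioc, Finset.mem_union]
      omega
    rw [hu, Finset.sum_union]
    exact Finset.disjoint_left.2 (by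
      intro x hx hy
      simp only [Finset.mem_Icc] at hx
      simp only [Finset.mem_Ioc] at hy
      omega)
  set Sig : ℝ := ∑ t ∈ Finset.Icc ibar jbar, a t with hSigdef
  have hL : (ibar : ℝ) ≤ jbar := Nat.cast_le.mpr hij
  have hLpos : (0 : ℝ) < (jbar : ℝ) - ibar + 1 := by linarith
  have hPpos : (0 : ℝ) < (p : ℝ) := by exact_mod_cast hp
  -- the key inequality: Sig * p ≤ S * len
  have hkey : Sig * p ≤ S * ((jbar : ℝ) - ibar + 1) := by
    have hsp : ∑ t ∈ Finset.Icc ibar jbar, a t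
        = ∑ t ∈ Finset.Icc ibar (jbar - p), a t + ∑ t ∈ Finset.Ioc (jbar - p) jbar, a t :=
      hsplit ibar (jbar - p) jbar (by omega) (by omega)
    have hchunk : ∑ t ∈ Finset.Ioc (jbar - p) jbar, a t = S := by
      have h : (jbar - p) + p = jbar := by omega
      have := hC (jbar - p)
      rwa [h] at this
    have hm := hmax ibar (jbar - p) hlo (by omega) (by omega)
    unfold intervalDensity at hm
    have hcast : ((jbar - p : ℕ) : ℝ) = (jbar : ℝ) - p := by
      have : p ≤ jbar := by omega
      push_cast [this]; ring
    rw [hcast] at hm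
    have hL'pos : (0 : ℝ) < (jbar : ℝ) - p - ibar + 1 := by
      have : (ibar : ℝ) ≤ (jbar : ℝ) - p := by
        have h2 : ((ibar + p : ℕ) : ℝ) ≤ (jbar : ℝ) := Nat.cast_le.mpr hspan
        push_cast at h2; linarith
      linarith
    rw [div_le_div_iff₀ hL'pos hLpos] at hm
    have hT : ∑ t ∈ Finset.Icc ibar (jbar - p), a t = Sig - S := by
      rw [hSigdef, hsp, hchunk]; ring
    rw [hT, hSigdef.symm] at hm
    nlinarith [hm]
  -- sum formula for each k
  have hsum : ∀ k : ℕ, ∑ t ∈ Finset.Icc ibar (jbar + k * p), a t = Sig + k * S := by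
    intro k
    induction k with
    | zero => simp [hSigdef]
    | succ n ih =>
      have he : jbar + (n + 1) * p = (jbar + n * p) + p := by ring
      rw [he, hsplit ibar (jbar + n * p) ((jbar + n * p) + p) (by omega) (by omega),
        hC (jbar + n * p), ih]
      push_cast; ring
  have hmono : Monotone (fun k : ℕ => intervalDensity a ibar (jbar + k * p)) := by
    apply monotone_nat_of_le_succ
    intro k
    simp only [intervalDensity]
    rw [hsum k, hsum (k + 1)]
    have hd1 : ((jbar + k * p : ℕ) : ℝ) - ibar + 1 = ((jbar : ℝ) - ibar + 1) + k * p := by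
      push_cast; ring
    have hd2 : ((jbar + (k + 1) * p : ℕ) : ℝ) - ibar + 1
        = ((jbar : ℝ) - ibar + 1) + (k + 1) * p := by
      push_cast; ring
    rw [hd1, hd2]
    have hk0 : (0 : ℝ) ≤ (k : ℝ) := Nat.cast_nonneg k
    have hp1 : (0 : ℝ) < ((jbar : ℝ) - ibar + 1) + k * p := by nlinarith
    have hp2 : (0 : ℝ) < ((jbar : ℝ) - ibar + 1) + (k + 1) * p := by nlinarith
    rw [div_le_div_iff₀ hp1 hp2]
    push_cast
    nlinarith [hkey]
  refine ⟨?_, hmono⟩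
  have h01 := hmono (Nat.zero_le 1)
  simpa using h01
end

section
/- For a p-periodic nonnegative sequence with interval density ρ(i,j) = (sum_{t=i}^j a_t)/(j−i+1): if the maximum-density interval [ī, j̄] within one period window satisfies j̄ < ī + p, then appending a full period strictly does not increase density, i.e. ρ(ī, j̄ + p) ≤ ρ(ī, j̄), and inductively ρ(ī, j̄ + kp) ≤ ρ(ī, j̄) for all k ≥ 0; hence [ī, j̄] is a maximum-density interval over the whole horizon. -/
open Finset

/-- Splitting an `Icc` sum at an interior point. -/
lemma sum_Icc_split (a : ℕ → ℝ) {i j k : ℕ} (h1 : i ≤ j + 1) (h2 : j ≤ k) :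
    ∑ t ∈ Finset.Icc i k, a t =
      ∑ t ∈ Finset.Icc i j, a t + ∑ t ∈ Finset.Icc (j + 1) k, a t := by
  rcases Nat.lt_or_ge j i with hji | hij
  · have hi : i = j + 1 := by omega
    subst hi
    simp [Finset.Icc_eq_empty_of_lt hji]
  · rw [Finset.Icc_add_one_left_eq_Ioc, ← Finset.sum_union (by
      rw [Finset.disjoint_left]
      intro x hx hx'
      simp only [Finset.mem_Icc, Finset.mem_Ioc] at hx hx'
      omega)]
    congr 1
    ext x
    simp only [Finset.mem_Icc, Finset.mem_union, Finset.mem_Ioc]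
    omega

/-- Shifting an `Icc` sum by the period. -/
lemma sum_Icc_shift (a : ℕ → ℝ) (p : ℕ) (hper : ∀ t, a (t + p) = a t) (i j : ℕ) :
    ∑ t ∈ Finset.Icc (i + p) (j + p), a t = ∑ t ∈ Finset.Icc i j, a t := by
  rw [← Finset.map_add_right_Icc, Finset.sum_map]
  simp [addRightEmbedding, hper]

/-- The sum over one full period is independent of the starting point. -/
lemma sum_Icc_period_const (a : ℕ → ℝ) (p : ℕ) (hp : 1 ≤ p)
    (hper : ∀ t, a (t + p) = a t) (i : ℕ) :
    ∑ t ∈ Finset.Icc (i + 1) (i + p), a t = ∑ t ∈ Finset.Icc i (i + p - 1), a t := by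
  have h1 : ∑ t ∈ Finset.Icc i (i + p), a t =
      ∑ t ∈ Finset.Icc i i, a t + ∑ t ∈ Finset.Icc (i + 1) (i + p), a t :=
    sum_Icc_split a (by omega) (by omega)
  have h2 : i + p = (i + p - 1) + 1 := by omega
  have h3 : ∑ t ∈ Finset.Icc i ((i + p - 1) + 1), a t =
      ∑ t ∈ Finset.Icc i (i + p - 1), a t + a ((i + p - 1) + 1) :=
    Finset.sum_Icc_succ_top (by omega) a
  rw [h2] at h1
  rw [h3] at h1
  have h4 : a ((i + p - 1) + 1) = a i := by
    rw [show (i + p - 1) + 1 = i + p by omega, hper]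
  rw [h4] at h1
  rw [← h2] at h1
  simp only [Finset.Icc_self, Finset.sum_singleton] at h1
  linarith

/-- The full-period sum starting at any point `≥ lo` equals the one starting at `lo`. -/
lemma sum_Icc_period_eq (a : ℕ → ℝ) (p : ℕ) (hp : 1 ≤ p)
    (hper : ∀ t, a (t + p) = a t) (lo : ℕ) :
    ∀ n : ℕ, ∑ t ∈ Finset.Icc (lo + n) (lo + n + p - 1), a t
      = ∑ t ∈ Finset.Icc lo (lo + p - 1), a t := by
  intro n
  induction n with
  | zero => simp
  | succ n ih =>
      have h := sum_Icc_period_const a p hp hper (lo + n)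
      rw [show lo + (n + 1) = (lo + n) + 1 by omega,
        show (lo + n) + 1 + p - 1 = (lo + n) + p by omega, h, ih]

/-- Lemma 1 (case `j̄ < ī + p`): for a `p`-periodic nonnegative weight sequence,
if `[ī, j̄]` maximizes the density over subintervals of a window of length `ê`
(with `p ≤ ê + 1`, so a full period fits in the window) and `j̄ < ī + p`, then
appending full periods does not increase the density:
`ρ(ī, j̄ + k·p) ≤ ρ(ī, j̄)` for all `k ≥ 0`. -/
theorem periodic_density_short_interval (a : ℕ → ℝ) (p : ℕ) (hp : 1 ≤ p)
    (ha : ∀ t, 0 ≤ a t) (hper : ∀ t, a (t + p) = a t)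
    (lo ehat ibar jbar : ℕ) (hpe : p ≤ ehat + 1)
    (hlo : lo ≤ ibar) (hij : ibar ≤ jbar) (hwin : jbar ≤ lo + ehat)
    (hshort : jbar < ibar + p)
    (hmax : ∀ i j, lo ≤ i → i ≤ j → j ≤ lo + ehat →
      intervalDensity a i j ≤ intervalDensity a ibar jbar) :
    ∀ k : ℕ, intervalDensity a ibar (jbar + k * p) ≤ intervalDensity a ibar jbar := by
  set Sbar : ℝ := ∑ t ∈ Finset.Icc ibar jbar, a t with hSbar
  set P : ℝ := ∑ t ∈ Finset.Icc lo (lo + p - 1), a t with hPdef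
  set L : ℝ := (jbar : ℝ) - ibar + 1 with hLdef
  have hL : (0:ℝ) < L := by
    have : (ibar : ℝ) ≤ jbar := by exact_mod_cast hij
    simp only [hLdef]; linarith
  -- the full period sum is dominated by p copies of the optimal density
  have hP : P * L ≤ (p : ℝ) * Sbar := by
    have h := hmax lo (lo + p - 1) le_rfl (by omega) (by omega)
    unfold intervalDensity at h
    have hcast : ((lo + p - 1 : ℕ) : ℝ) - (lo : ℝ) + 1 = (p : ℝ) := by
      have : ((lo + p - 1 : ℕ) : ℝ) = (lo : ℝ) + (p : ℝ) - 1 := by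
        have h' : lo + p - 1 + 1 = lo + p := by omega
        have := congrArg (fun n : ℕ => (n : ℝ)) h'
        push_cast at this
        linarith
      rw [this]; ring
    rw [hcast] at h
    have hp0 : (0:ℝ) < (p : ℝ) := by exact_mod_cast hp
    rw [div_le_div_iff₀ hp0 hL] at h
    linarith [h]
  -- full period sums starting anywhere ≥ lo
  have hfull : ∀ m : ℕ, lo ≤ m → ∑ t ∈ Finset.Icc m (m + p - 1), a t = P := by
    intro m hm
    obtain ⟨n, rfl⟩ : ∃ n, m = lo + n := ⟨m - lo, by omega⟩
    exact sum_Icc_period_eq a p hp hper lo n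
  -- main claim by induction
  have claim : ∀ k : ℕ,
      (∑ t ∈ Finset.Icc ibar (jbar + k * p), a t) * L ≤ Sbar * (L + (k * p : ℕ)) := by
    intro k
    induction k with
    | zero => simp [hSbar, mul_comm]
    | succ k ih =>
        have hsplit : ∑ t ∈ Finset.Icc ibar (jbar + (k + 1) * p), a t =
            ∑ t ∈ Finset.Icc ibar (jbar + k * p), a t
              + ∑ t ∈ Finset.Icc (jbar + k * p + 1) (jbar + (k + 1) * p), a t :=
          sum_Icc_split a (by omega) (by nlinarith)
        have hfp : ∑ t ∈ Finset.Icc (jbar + k * p + 1) (jbar + (k + 1) * p), a t = P := by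
          have := hfull (jbar + k * p + 1) (by omega)
          rw [show jbar + k * p + 1 + p - 1 = jbar + (k + 1) * p by ring_nf; omega] at this
          exact this
        rw [hsplit, hfp]
        have hc1 : ((k * p : ℕ) : ℝ) = (k : ℝ) * p := by push_cast; ring
        have hc2 : (((k + 1) * p : ℕ) : ℝ) = ((k : ℝ) + 1) * p := by push_cast; ring
        rw [hc2]; rw [hc1] at ih
        nlinarith [hP, ih]
  intro k
  unfold intervalDensity
  have hlen : (0:ℝ) < ((jbar + k * p : ℕ) : ℝ) - (ibar : ℝ) + 1 := by
    have : (ibar : ℝ) ≤ ((jbar + k * p : ℕ) : ℝ) := by exact_mod_cast (by omega : ibar ≤ jbar + k * p)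
    linarith
  rw [div_le_div_iff₀ hlen hL]
  have hlen2 : ((jbar + k * p : ℕ) : ℝ) - (ibar : ℝ) + 1 = L + ((k * p : ℕ) : ℝ) := by
    simp only [hLdef]; push_cast; ring
  rw [hlen2]
  exact claim k
end
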